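/- Let σ be a positive definite density matrix and ξ a Hermitian matrix with -σ ⪯ ξ ⪯ σ. Define R_σ[ξ] = ∫₀^∞ (σ+zI)⁻¹ ξ (σ+zI)⁻¹ ξ (σ+zI)⁻¹ dz. Then 0 ⪯ R_σ[ξ] ⪯ I. -/

import Mathlib

open Matrix BigOperators MeasureTheory Set
open scoped ComplexOrder

section AuxScalar

lemma int_sq_aux {a : ℝ} (ha : 0 < a) :
    IntegrableOn (fun z => ((a + z) ^ 2)⁻¹) (Ioi (0:ℝ)) ∧
      ∫ z in Ioi (0:ℝ), ((a + z) ^ 2)⁻¹ = a⁻¹ := by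
  have hderiv : ∀ z ∈ Ici (0:ℝ), HasDerivAt (fun z => -(a + z)⁻¹) (((a + z) ^ 2)⁻¹) z := by
    intro z hz
    have hz0 : (0:ℝ) ≤ z := hz
    have hne : a + z ≠ 0 := by positivity
    have h1 : HasDerivAt (fun z : ℝ => a + z) 1 z := (hasDerivAt_id z).const_add a
    have h2 := (h1.inv hne).neg
    have h3 : ((a + z) ^ 2)⁻¹ = -(-1 / (a + z) ^ 2) := by
      field_simp
    rw [← h3] at h2
    exact h2
  have hpos : ∀ z ∈ Ioi (0:ℝ), 0 ≤ ((a + z) ^ 2)⁻¹ := by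
    intro z hz; positivity
  have htend : Filter.Tendsto (fun z : ℝ => -(a + z)⁻¹) Filter.atTop (nhds 0) := by
    have h1 : Filter.Tendsto (fun z : ℝ => a + z) Filter.atTop Filter.atTop :=
      Filter.tendsto_atTop_add_const_left _ a Filter.tendsto_id
    simpa using h1.inv_tendsto_atTop.neg
  refine ⟨integrableOn_Ioi_deriv_of_nonneg' hderiv hpos htend, ?_⟩
  rw [integral_Ioi_of_hasDerivAt_of_nonneg' hderiv hpos htend]
  simp

lemma int_cube_aux {a b c : ℝ} (ha : 0 < a) (hb : 0 < b) (hc : 0 < c) :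
    IntegrableOn (fun z => (a + z)⁻¹ * (b + z)⁻¹ * (c + z)⁻¹) (Ioi (0:ℝ)) := by
  set m := min a c with hm
  have hm0 : 0 < m := lt_min ha hc
  have hg : IntegrableOn (fun z => b⁻¹ * ((m + z) ^ 2)⁻¹) (Ioi (0:ℝ)) :=
    (int_sq_aux hm0).1.const_mul _
  refine Integrable.mono' hg ?_ ?_
  · apply ContinuousOn.aestronglyMeasurable ?_ measurableSet_Ioi
    have : ∀ z ∈ Ioi (0:ℝ), ∀ t : ℝ, 0 < t → t + z ≠ 0 := fun z hz t ht => by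
      have : (0:ℝ) < z := hz; positivity
    exact (((continuousOn_const.add continuousOn_id).inv₀ (fun z hz => this z hz a ha)).mul
      ((continuousOn_const.add continuousOn_id).inv₀ (fun z hz => this z hz b hb))).mul
      ((continuousOn_const.add continuousOn_id).inv₀ (fun z hz => this z hz c hc))
  · filter_upwards [ae_restrict_mem measurableSet_Ioi] with z hz
    have hz0 : (0:ℝ) < z := hz
    have h1 : (a + z)⁻¹ ≤ (m + z)⁻¹ := by
      apply inv_anti₀ (by positivity); gcongr; exact min_le_left _ _
    have h3 : (c + z)⁻¹ ≤ (m + z)⁻¹ := by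
      apply inv_anti₀ (by positivity); gcongr; exact min_le_right _ _
    have h2 : (b + z)⁻¹ ≤ b⁻¹ := by
      apply inv_anti₀ hb; linarith
    rw [Real.norm_eq_abs, abs_of_nonneg (by positivity)]
    calc (a + z)⁻¹ * (b + z)⁻¹ * (c + z)⁻¹ ≤ (m + z)⁻¹ * b⁻¹ * (m + z)⁻¹ := by
          gcongr <;> positivity
      _ = b⁻¹ * ((m + z) ^ 2)⁻¹ := by rw [sq, mul_inv]; ring

end AuxScalar

section AuxMatrix

variable {n : Type*} [Fintype n] [DecidableEq n]


lemma diag_mul_diag (f g h : n → ℂ) (hfg : ∀ i, f i * g i = h i) :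
    Matrix.diagonal f * Matrix.diagonal g = Matrix.diagonal h := by
  rw [Matrix.diagonal_mul_diagonal]
  exact congrArg _ (funext hfg)

lemma isHermitian_diag_ofReal (f : n → ℝ) :
    (Matrix.diagonal (fun i => (f i : ℂ))).IsHermitian := by
  rw [Matrix.IsHermitian, Matrix.diagonal_conjTranspose]
  exact congrArg _ (funext fun i => Complex.conj_ofReal _)

lemma lemK {d : n → ℝ} (hd : ∀ i, 0 < d i)
    {η : Matrix n n ℂ} (hη : η.IsHermitian)
    (h1 : (Matrix.diagonal (fun i => (d i : ℂ)) - η).PosSemidef)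
    (h2 : (η + Matrix.diagonal (fun i => (d i : ℂ))).PosSemidef) :
    (Matrix.diagonal (fun i => (d i : ℂ))
      - η * Matrix.diagonal (fun i => (((d i)⁻¹ : ℝ) : ℂ)) * η).PosSemidef := by
  set Dm := Matrix.diagonal (fun i => (d i : ℂ)) with hDm
  set s := Matrix.diagonal (fun i => (((Real.sqrt (d i))⁻¹ : ℝ) : ℂ)) with hs
  set t := Matrix.diagonal (fun i => ((Real.sqrt (d i) : ℝ) : ℂ)) with ht
  have hsd : ∀ i, Real.sqrt (d i) ≠ 0 := fun i => ne_of_gt (Real.sqrt_pos.mpr (hd i))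
  have hts : t * s = 1 := by
    rw [ht, hs, ← Matrix.diagonal_one]
    exact diag_mul_diag _ _ _ fun i => by
      rw [← Complex.ofReal_mul, mul_inv_cancel₀ (hsd i), Complex.ofReal_one]
  have hst : s * t = 1 := by
    rw [ht, hs, ← Matrix.diagonal_one]
    exact diag_mul_diag _ _ _ fun i => by
      rw [← Complex.ofReal_mul, inv_mul_cancel₀ (hsd i), Complex.ofReal_one]
  have htt : t * t = Dm := by
    rw [ht, hDm]
    exact diag_mul_diag _ _ _ fun i => by
      rw [← Complex.ofReal_mul, Real.mul_self_sqrt (hd i).le]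
  have hss : s * s = Matrix.diagonal (fun i => (((d i)⁻¹ : ℝ) : ℂ)) := by
    rw [hs]
    exact diag_mul_diag _ _ _ fun i => by
      rw [← Complex.ofReal_mul, ← mul_inv, Real.mul_self_sqrt (hd i).le]
  have hsH : s.IsHermitian := isHermitian_diag_ofReal _
  have htH : t.IsHermitian := isHermitian_diag_ofReal _
  have hsDs : s * Dm * s = 1 := by
    rw [← htt, ← mul_assoc s t t, hst, Matrix.one_mul]; exact hts
  have hHH : (s * η * s).IsHermitian := by
    rw [Matrix.IsHermitian, Matrix.conjTranspose_mul, Matrix.conjTranspose_mul,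
      hsH.eq, hη.eq, mul_assoc]
  have h1' : ((1 : Matrix n n ℂ) - s * η * s).PosSemidef := by
    have := h1.conjTranspose_mul_mul_same s
    rwa [hsH.eq, mul_sub, sub_mul, hsDs] at this
  have h2' : (s * η * s + (1 : Matrix n n ℂ)).PosSemidef := by
    have := h2.conjTranspose_mul_mul_same s
    rwa [hsH.eq, mul_add, add_mul, hsDs] at this
  set V : Matrix n n ℂ := (hHH.eigenvectorUnitary : Matrix n n ℂ) with hV
  set μ := hHH.eigenvalues with hμ
  have hVs : star V * V = 1 := Matrix.mem_unitaryGroup_iff'.mp hHH.eigenvectorUnitary.2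
  have hVs' : V * star V = 1 := Matrix.mem_unitaryGroup_iff.mp hHH.eigenvectorUnitary.2
  have hdiag : star V * (s * η * s) * V = Matrix.diagonal (fun i => (μ i : ℂ)) :=
    by have := hHH.conjStarAlgAut_star_eigenvectorUnitary
       rw [Unitary.conjStarAlgAut_star_apply] at this
       exact this
  have hone : (1 : Matrix n n ℂ) - Matrix.diagonal (fun i => (μ i : ℂ))
      = Matrix.diagonal (fun i => ((1 - μ i : ℝ) : ℂ)) := by
    rw [← Matrix.diagonal_one, Matrix.diagonal_sub]
    exact congrArg _ (funext fun i => by push_cast; ring)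
  have hone' : Matrix.diagonal (fun i => (μ i : ℂ)) + (1 : Matrix n n ℂ)
      = Matrix.diagonal (fun i => ((μ i + 1 : ℝ) : ℂ)) := by
    rw [← Matrix.diagonal_one, Matrix.diagonal_add]
    exact congrArg _ (funext fun i => by push_cast; ring)
  have hmu_le : ∀ i, μ i ≤ 1 := by
    intro i
    have h := h1'.conjTranspose_mul_mul_same V
    rw [Matrix.mul_sub, Matrix.sub_mul, ← Matrix.star_eq_conjTranspose, Matrix.mul_one,
      hVs, hdiag, hone] at h
    have := Matrix.posSemidef_diagonal_iff.mp h i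
    rw [Complex.zero_le_real] at this
    linarith
  have hmu_ge : ∀ i, -1 ≤ μ i := by
    intro i
    have h := h2'.conjTranspose_mul_mul_same V
    rw [Matrix.mul_add, Matrix.add_mul, ← Matrix.star_eq_conjTranspose, Matrix.mul_one,
      hVs, hdiag, hone'] at h
    have := Matrix.posSemidef_diagonal_iff.mp h i
    rw [Complex.zero_le_real] at this
    linarith
  -- 1 - (sηs)² is PSD
  set F := Matrix.diagonal (fun i => (μ i : ℂ)) with hF
  have hspec : s * η * s = V * F * star V := hHH.spectral_theorem
  have hmid : (V * F * star V) * (V * F * star V) = V * (F * F) * star V := by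
    simp only [Matrix.mul_assoc]
    rw [← Matrix.mul_assoc (star V) V, hVs, Matrix.one_mul]
  have hsq : (1 : Matrix n n ℂ) - (s * η * s) * (s * η * s)
      = V * ((1 : Matrix n n ℂ) - F * F) * star V := by
    rw [hspec, hmid, Matrix.mul_sub, Matrix.sub_mul, Matrix.mul_one, hVs']
  have hFF : (1 : Matrix n n ℂ) - F * F
      = Matrix.diagonal (fun i => ((1 - μ i * μ i : ℝ) : ℂ)) := by
    rw [hF, diag_mul_diag _ _ (fun i => ((μ i * μ i : ℝ) : ℂ)) (fun i => by push_cast; ring),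
      ← Matrix.diagonal_one, Matrix.diagonal_sub]
    exact congrArg _ (funext fun i => by push_cast; ring)
  have hsqPSD : ((1 : Matrix n n ℂ) - (s * η * s) * (s * η * s)).PosSemidef := by
    rw [hsq, hFF, Matrix.star_eq_conjTranspose]
    refine Matrix.PosSemidef.mul_mul_conjTranspose_same ?_ V
    refine Matrix.posSemidef_diagonal_iff.mpr fun i => ?_
    rw [Complex.zero_le_real]
    nlinarith [hmu_le i, hmu_ge i]
  -- conjugate back by t
  have key := hsqPSD.conjTranspose_mul_mul_same t
  rw [htH.eq, mul_sub, sub_mul, mul_one, htt] at key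
  have heq : t * ((s * η * s) * (s * η * s)) * t
      = η * Matrix.diagonal (fun i => (((d i)⁻¹ : ℝ) : ℂ)) * η := by
    rw [← hss]
    calc t * (s * η * s * (s * η * s)) * t
        = (t * s) * (η * ((s * s) * (η * (s * t)))) := by
          simp only [Matrix.mul_assoc]
      _ = η * (s * s) * η := by
          rw [hts, hst, Matrix.one_mul, Matrix.mul_one, ← Matrix.mul_assoc]
  rw [heq] at key
  exact key

lemma herm_shift {M : Matrix n n ℂ} (hM : M.IsHermitian) (x w : n → ℂ) :
    star x ⬝ᵥ (M *ᵥ w) = star (M *ᵥ x) ⬝ᵥ w := by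
  rw [Matrix.dotProduct_mulVec, Matrix.star_mulVec, hM.eq]

lemma quad_diag (c : n → ℝ) (y : n → ℂ) :
    star y ⬝ᵥ (Matrix.diagonal (fun k => ((c k : ℝ) : ℂ)) *ᵥ y)
      = ((∑ k, c k * Complex.normSq (y k) : ℝ) : ℂ) := by
  rw [dotProduct]
  push_cast
  refine Finset.sum_congr rfl fun k _ => ?_
  rw [Matrix.mulVec_diagonal]
  have : (starRingEnd ℂ) (y k) * y k = ((Complex.normSq (y k) : ℝ) : ℂ) := by
    rw [← Complex.normSq_eq_conj_mul_self]
  simp only [Pi.star_apply, Complex.star_def]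
  rw [show (starRingEnd ℂ) (y k) * ((c k : ℂ) * y k)
    = (c k : ℂ) * ((starRingEnd ℂ) (y k) * y k) from by ring, this]

lemma quad_expand (A : Matrix n n ℂ) (a b : n → ℂ) :
    a ⬝ᵥ (A *ᵥ b) = ∑ k, ∑ l, a k * b l * A k l := by
  simp only [dotProduct, Matrix.mulVec, Finset.mul_sum]
  exact Finset.sum_congr rfl fun k _ => Finset.sum_congr rfl fun l _ => by ring

lemma triple_entry (U M W : Matrix n n ℂ) (i j : n) :
    (U * M * W) i j = (fun k => U i k) ⬝ᵥ (M *ᵥ (fun l => W l j)) := by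
  simp only [Matrix.mul_apply, dotProduct, Matrix.mulVec, Finset.sum_mul,
    Finset.mul_sum]
  rw [Finset.sum_comm]
  exact Finset.sum_congr rfl fun k _ => Finset.sum_congr rfl fun l _ => by ring

lemma integral_quad {A : ℝ → Matrix n n ℂ}
    (hint : ∀ k l, IntegrableOn (fun z => A z k l) (Ioi (0:ℝ)))
    (a b : n → ℂ) :
    ∫ z in Ioi (0:ℝ), a ⬝ᵥ (A z *ᵥ b)
      = ∑ k, ∑ l, a k * b l * ∫ z in Ioi (0:ℝ), A z k l := by
  have h1 : (fun z => a ⬝ᵥ (A z *ᵥ b))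
      = fun z => ∑ k, ∑ l, a k * b l * A z k l := funext fun z => quad_expand _ _ _
  rw [h1, integral_finset_sum _ (fun k _ =>
    integrable_finset_sum _ (fun l _ => (hint k l).const_mul _))]
  refine Finset.sum_congr rfl fun k _ => ?_
  rw [integral_finset_sum _ (fun l _ => (hint k l).const_mul _)]
  exact Finset.sum_congr rfl fun l _ => integral_const_mul _ _


end AuxMatrix

/-- The map `R_σ[ξ] = ∫₀^∞ (σ+zI)⁻¹ ξ (σ+zI)⁻¹ ξ (σ+zI)⁻¹ dz`, defined entrywise. -/
noncomputable def Rmap {n : Type*} [Fintype n] [DecidableEq n]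
    (σ ξ : Matrix n n ℂ) : Matrix n n ℂ :=
  Matrix.of fun i j =>
    ∫ z in Set.Ioi (0 : ℝ),
      ((σ + (z : ℂ) • 1)⁻¹ * ξ * (σ + (z : ℂ) • 1)⁻¹ * ξ * (σ + (z : ℂ) • 1)⁻¹) i j

/-- If `σ` is a positive definite density matrix and `-σ ⪯ ξ ⪯ σ`, then
`0 ⪯ R_σ[ξ] ⪯ I`. -/
theorem Rmap_loewner_bounded
    {n : Type*} [Fintype n] [DecidableEq n]
    (σ : Matrix n n ℂ) (hσ : σ.PosDef) (htr : σ.trace = 1)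
    (ξ : Matrix n n ℂ) (hξ : ξ.IsHermitian)
    (h₁ : (σ - ξ).PosSemidef) (h₂ : (ξ + σ).PosSemidef) :
    (Rmap σ ξ).PosSemidef ∧ ((1 : Matrix n n ℂ) - Rmap σ ξ).PosSemidef := by
  classical
  have hHσ := hσ.1
  set U : Matrix n n ℂ := (hHσ.eigenvectorUnitary : Matrix n n ℂ) with hU
  set d : n → ℝ := hHσ.eigenvalues with hdval
  have hd : ∀ i, 0 < d i := fun i => hσ.eigenvalues_pos i
  have hUs : star U * U = 1 := Matrix.mem_unitaryGroup_iff'.mp hHσ.eigenvectorUnitary.2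
  have hUs' : U * star U = 1 := Matrix.mem_unitaryGroup_iff.mp hHσ.eigenvectorUnitary.2
  have cancelU : ∀ X : Matrix n n ℂ, star U * (U * X) = X := fun X => by
    rw [← Matrix.mul_assoc, hUs, Matrix.one_mul]
  set Dm := Matrix.diagonal (fun i => (d i : ℂ)) with hDm
  have hdiagσ : star U * σ * U = Dm := by
    have := hHσ.conjStarAlgAut_star_eigenvectorUnitary
    rw [Unitary.conjStarAlgAut_star_apply] at this
    exact this
  have hspecσ : σ = U * Dm * star U := hHσ.spectral_theorem
  set η := star U * ξ * U with hη
  have hηH : η.IsHermitian := by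
    rw [Matrix.IsHermitian, hη, Matrix.star_eq_conjTranspose, Matrix.conjTranspose_mul,
      Matrix.conjTranspose_mul, hξ.eq, Matrix.conjTranspose_conjTranspose, Matrix.mul_assoc]
  have hξη : ξ = U * η * star U := by
    have hassoc : U * (star U * ξ * U) * star U = (U * star U) * (ξ * (U * star U)) := by
      simp only [Matrix.mul_assoc]
    rw [hη, hassoc, hUs', Matrix.one_mul, Matrix.mul_one]
  -- transfer hypotheses to the eigenbasis
  have hDmη : (Dm - η).PosSemidef := by
    have h := h₁.conjTranspose_mul_mul_same U
    rwa [← Matrix.star_eq_conjTranspose, Matrix.mul_sub, Matrix.sub_mul, hdiagσ, ← hη] at h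
  have hηDm : (η + Dm).PosSemidef := by
    have h := h₂.conjTranspose_mul_mul_same U
    rwa [← Matrix.star_eq_conjTranspose, Matrix.mul_add, Matrix.add_mul, hdiagσ, ← hη] at h
  have hK := lemK hd hηH hDmη hηDm
  -- resolvent-type diagonal matrices
  set r : n → ℝ → ℝ := fun i z => (d i + z)⁻¹ with hr
  set E : ℝ → Matrix n n ℂ := fun z => Matrix.diagonal (fun i => ((r i z : ℝ) : ℂ)) with hE
  set N : ℝ → Matrix n n ℂ := fun z => E z * η * E z * η * E z with hN
  have hEherm : ∀ z, (E z).IsHermitian := fun z => by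
    rw [hE]; exact isHermitian_diag_ofReal _
  have hdz : ∀ z ∈ Ioi (0:ℝ), ∀ i, (0:ℝ) < d i + z := fun z hz i => by
    have h1 : (0:ℝ) < z := hz
    have h2 := hd i; linarith
  -- the inverse formula
  have hinv : ∀ z ∈ Ioi (0:ℝ), (σ + (z : ℂ) • 1)⁻¹ = U * E z * star U := by
    intro z hz
    have hexp : σ + (z : ℂ) • 1
        = U * Matrix.diagonal (fun i => ((d i + z : ℝ) : ℂ)) * star U := by
      have h1 : (z : ℂ) • (1 : Matrix n n ℂ) = U * ((z : ℂ) • 1) * star U := by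
        rw [Matrix.mul_smul, Matrix.smul_mul, Matrix.mul_one, hUs']
      rw [hspecσ, h1, ← Matrix.add_mul, ← Matrix.mul_add]
      congr 2
      rw [Matrix.smul_one_eq_diagonal, hDm, Matrix.diagonal_add]
      exact congrArg _ (funext fun i => by push_cast; ring)
    apply Matrix.inv_eq_right_inv
    have hstep : (U * Matrix.diagonal (fun i => ((d i + z : ℝ) : ℂ)) * star U)
          * (U * E z * star U)
        = U * ((Matrix.diagonal (fun i => ((d i + z : ℝ) : ℂ)) * E z) * star U) := by
      simp only [Matrix.mul_assoc]
      rw [cancelU (E z * star U)]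
    rw [hexp, hstep]
    simp only [hE]
    rw [diag_mul_diag (fun i => ((d i + z : ℝ) : ℂ)) (fun i => ((r i z : ℝ) : ℂ))
      (fun _ => (1:ℂ)) (fun i => by
        simp only [hr]
        rw [← Complex.ofReal_mul, mul_inv_cancel₀ (ne_of_gt (hdz z hz i)),
          Complex.ofReal_one])]
    rw [Matrix.diagonal_one, Matrix.one_mul, hUs']
  -- the integrand in the eigenbasis
  have hM : ∀ z ∈ Ioi (0:ℝ),
      ((σ + (z:ℂ) • 1)⁻¹ * ξ * (σ + (z:ℂ) • 1)⁻¹ * ξ * (σ + (z:ℂ) • 1)⁻¹)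
        = U * N z * star U := by
    intro z hz
    rw [hinv z hz, hξη]
    simp only [hN, Matrix.mul_assoc, cancelU]
  -- entrywise formula for N
  have hNentry : ∀ (z : ℝ) (k l : n), N z k l
      = ∑ m, η k m * η m l * ((r k z * r m z * r l z : ℝ) : ℂ) := by
    intro z k l
    simp only [hN, hE]
    rw [Matrix.mul_diagonal, Matrix.mul_apply, Finset.sum_mul]
    refine Finset.sum_congr rfl fun m _ => ?_
    rw [Matrix.mul_diagonal, Matrix.diagonal_mul]
    push_cast
    ring
  -- integrability of the entries of N
  have hNint : ∀ k l, IntegrableOn (fun z => N z k l) (Ioi (0:ℝ)) := by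
    intro k l
    have heq : (fun z => N z k l)
        = fun z => ∑ m, η k m * η m l * ((r k z * r m z * r l z : ℝ) : ℂ) :=
      funext fun z => hNentry z k l
    rw [heq]
    refine integrable_finset_sum _ fun m _ => ?_
    have := ((int_cube_aux (hd k) (hd m) (hd l)).ofReal (𝕜 := ℂ)).const_mul (η k m * η m l)
    simpa [hr] using this
  -- the integrated matrix in the eigenbasis
  set R' := Matrix.of (fun k l => ∫ z in Ioi (0:ℝ), N z k l) with hR'
  have hR'app : ∀ k l, R' k l = ∫ z in Ioi (0:ℝ), N z k l := fun k l => rfl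
  have hRmap : Rmap σ ξ = U * R' * star U := by
    ext i j
    show (∫ z in Ioi (0:ℝ),
      ((σ + (z:ℂ) • 1)⁻¹ * ξ * (σ + (z:ℂ) • 1)⁻¹ * ξ * (σ + (z:ℂ) • 1)⁻¹) i j)
        = (U * R' * star U) i j
    rw [setIntegral_congr_fun measurableSet_Ioi
      (fun z hz => by rw [hM z hz] : EqOn _ (fun z => (U * N z * star U) i j) (Ioi 0))]
    have h2 : (fun z => (U * N z * star U) i j)
        = fun z => (fun k => U i k) ⬝ᵥ (N z *ᵥ (fun l => star U l j)) :=
      funext fun z => triple_entry _ _ _ _ _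
    rw [h2, integral_quad hNint, triple_entry, quad_expand]
    rfl
  -- N z is Hermitian
  have hNherm : ∀ z, (N z).IsHermitian := by
    intro z
    rw [Matrix.IsHermitian, hN]
    simp only [Matrix.conjTranspose_mul, (hEherm z).eq, hηH.eq, Matrix.mul_assoc]
  -- R' is Hermitian
  have hR'herm : R'.IsHermitian := by
    rw [Matrix.IsHermitian]
    ext k l
    rw [Matrix.conjTranspose_apply, Complex.star_def, hR'app, hR'app, ← integral_conj]
    refine integral_congr_ae (Filter.Eventually.of_forall fun z => ?_)
    calc (starRingEnd ℂ) (N z l k) = (N z)ᴴ k l := by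
          rw [Matrix.conjTranspose_apply, Complex.star_def]
      _ = N z k l := by rw [(hNherm z).eq]
  -- the key quadratic form estimates
  have hxkey : ∀ x : n → ℂ,
      (0:ℂ) ≤ star x ⬝ᵥ (R' *ᵥ x) ∧
      star x ⬝ᵥ (R' *ᵥ x) ≤ ((∑ k, Complex.normSq (x k) : ℝ) : ℂ) := by
    intro x
    set f : ℝ → ℝ := fun z => ∑ k, r k z * Complex.normSq ((η *ᵥ (E z *ᵥ x)) k) with hf
    set g : ℝ → ℝ :=
      fun z => ∑ k, (Complex.normSq (x k) * d k) * ((d k + z) ^ 2)⁻¹ with hg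
    -- pointwise formula for the quadratic form of N z
    have hFx : ∀ z, star x ⬝ᵥ (N z *ᵥ x) = ((f z : ℝ) : ℂ) := by
      intro z
      rw [hN]
      simp only [← Matrix.mulVec_mulVec]
      rw [herm_shift (hEherm z) x (η *ᵥ (E z *ᵥ (η *ᵥ (E z *ᵥ x)))),
        herm_shift hηH (E z *ᵥ x) (E z *ᵥ (η *ᵥ (E z *ᵥ x)))]
      rw [hE, hf]
      exact quad_diag (fun k => r k z) (η *ᵥ (E z *ᵥ x))
    -- the quadratic form of R' as an integral
    have hQF : star x ⬝ᵥ (R' *ᵥ x) = ∫ z in Ioi (0:ℝ), ((f z : ℝ) : ℂ) := by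
      rw [quad_expand]
      simp only [hR', Matrix.of_apply]
      rw [← integral_quad hNint (star x) x]
      exact integral_congr_ae (Filter.Eventually.of_forall fun z => hFx z)
    -- integrability of f and g
    have hfF : IntegrableOn (fun z => ((f z : ℝ) : ℂ)) (Ioi (0:ℝ)) := by
      have h1 : (fun z => ((f z : ℝ) : ℂ)) = fun z => star x ⬝ᵥ (N z *ᵥ x) :=
        funext fun z => (hFx z).symm
      have h2 : (fun z => star x ⬝ᵥ (N z *ᵥ x))
          = fun z => ∑ k, ∑ l, star x k * x l * N z k l :=
        funext fun z => quad_expand _ _ _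
      rw [h1, h2]
      exact integrable_finset_sum _ fun k _ =>
        integrable_finset_sum _ fun l _ => (hNint k l).const_mul _
    have hfint : IntegrableOn f (Ioi (0:ℝ)) := by
      have h := hfF.re
      simp [RCLike.re_to_complex] at h
      exact h
    have hgint : IntegrableOn g (Ioi (0:ℝ)) := by
      rw [hg]
      exact integrable_finset_sum _ fun k _ => ((int_sq_aux (hd k)).1).const_mul _
    -- the integral of g
    have hintg : ∫ z in Ioi (0:ℝ), g z = ∑ k, Complex.normSq (x k) := by
      rw [hg, integral_finset_sum _ (fun k _ => ((int_sq_aux (hd k)).1).const_mul _)]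
      refine Finset.sum_congr rfl fun k _ => ?_
      rw [integral_const_mul, (int_sq_aux (hd k)).2]
      field_simp [(hd k).ne']
    -- pointwise bound f ≤ g on Ioi 0
    have hfg : ∀ z ∈ Ioi (0:ℝ), f z ≤ g z := by
      intro z hz
      have hzpos : (0:ℝ) < z := hz
      have hp : f z ≤ ∑ k, (d k)⁻¹ * Complex.normSq ((η *ᵥ (E z *ᵥ x)) k) := by
        rw [hf]
        refine Finset.sum_le_sum fun k _ => ?_
        refine mul_le_mul_of_nonneg_right ?_ (Complex.normSq_nonneg _)
        rw [hr]
        exact inv_anti₀ (hd k) (by linarith)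
      have hps : ((∑ k, (d k)⁻¹ * Complex.normSq ((η *ᵥ (E z *ᵥ x)) k) : ℝ) : ℂ)
          = star (E z *ᵥ x) ⬝ᵥ
              ((η * Matrix.diagonal (fun i => (((d i)⁻¹ : ℝ) : ℂ)) * η) *ᵥ (E z *ᵥ x)) := by
        rw [show (η * Matrix.diagonal (fun i => (((d i)⁻¹ : ℝ) : ℂ)) * η) *ᵥ (E z *ᵥ x)
          = η *ᵥ (Matrix.diagonal (fun i => (((d i)⁻¹ : ℝ) : ℂ)) *ᵥ (η *ᵥ (E z *ᵥ x)))
          from by simp only [Matrix.mulVec_mulVec, Matrix.mul_assoc]]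
        rw [herm_shift hηH (E z *ᵥ x)
          (Matrix.diagonal (fun i => (((d i)⁻¹ : ℝ) : ℂ)) *ᵥ (η *ᵥ (E z *ᵥ x)))]
        exact (quad_diag (fun i => (d i)⁻¹) (η *ᵥ (E z *ᵥ x))).symm
      have hgs : ((g z : ℝ) : ℂ) = star (E z *ᵥ x) ⬝ᵥ (Dm *ᵥ (E z *ᵥ x)) := by
        rw [hDm]
        rw [quad_diag d (E z *ᵥ x)]
        rw [hg]
        norm_cast
        refine Finset.sum_congr rfl fun k _ => ?_
        rw [hE, Matrix.mulVec_diagonal, Complex.normSq_mul, Complex.normSq_ofReal, hr, sq,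
          mul_inv]
        ring
      have hkq := hK.dotProduct_mulVec_nonneg (E z *ᵥ x)
      rw [Matrix.sub_mulVec, dotProduct_sub] at hkq
      have hle := sub_nonneg.mp hkq
      rw [← hps, ← hgs] at hle
      rw [Complex.real_le_real] at hle
      calc f z ≤ _ := hp
        _ ≤ g z := hle
    have h0f : ∀ z ∈ Ioi (0:ℝ), 0 ≤ f z := by
      intro z hz
      rw [hf]
      refine Finset.sum_nonneg fun k _ => mul_nonneg ?_ (Complex.normSq_nonneg _)
      rw [hr]
      exact le_of_lt (inv_pos.mpr (hdz z hz k))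
    have hint_le : ∫ z in Ioi (0:ℝ), f z ≤ ∑ k, Complex.normSq (x k) := by
      rw [← hintg]
      exact setIntegral_mono_on hfint hgint measurableSet_Ioi hfg
    have hint_nonneg : (0:ℝ) ≤ ∫ z in Ioi (0:ℝ), f z :=
      setIntegral_nonneg measurableSet_Ioi h0f
    have hIof : (∫ z in Ioi (0:ℝ), ((f z : ℝ) : ℂ))
        = ((∫ z in Ioi (0:ℝ), f z : ℝ) : ℂ) := integral_ofReal
    constructor
    · rw [hQF, hIof]
      exact Complex.zero_le_real.mpr hint_nonneg
    · rw [hQF, hIof]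
      exact Complex.real_le_real.mpr hint_le
  have hPSD : R'.PosSemidef := .of_dotProduct_mulVec_nonneg hR'herm (fun x => (hxkey x).1)
  have h1R : ((1 : Matrix n n ℂ) - R').PosSemidef := by
    refine .of_dotProduct_mulVec_nonneg (Matrix.isHermitian_one.sub hR'herm) fun x => ?_
    rw [Matrix.sub_mulVec, dotProduct_sub, Matrix.one_mulVec]
    have hxx : star x ⬝ᵥ x = ((∑ k, Complex.normSq (x k) : ℝ) : ℂ) := by
      rw [dotProduct]
      push_cast
      refine Finset.sum_congr rfl fun k _ => ?_
      simp only [Pi.star_apply, Complex.star_def]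
      rw [← Complex.normSq_eq_conj_mul_self]
    rw [hxx]
    exact sub_nonneg.mpr (hxkey x).2
  constructor
  · rw [hRmap, Matrix.star_eq_conjTranspose]
    exact hPSD.mul_mul_conjTranspose_same U
  · have hsub : U * ((1 : Matrix n n ℂ) - R') * star U = 1 - U * R' * star U := by
      rw [Matrix.mul_sub, Matrix.sub_mul, Matrix.mul_one, hUs']
    rw [hRmap, ← hsub, Matrix.star_eq_conjTranspose]
    exact h1R.mul_mul_conjTranspose_same U
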